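/- For every integer k ≥ 1, d^2_MP(T^k_AA, T^k_BB) = 12k. -/

import Mathlib

namespace MPDist

/-- A rooted binary phylogenetic tree: leaves are labelled by taxa,
every internal vertex (including the root) has exactly two children. -/
inductive PTree (X : Type) : Type
  | leaf : X → PTree X
  | node : PTree X → PTree X → PTree X

namespace PTree

/-- The list of leaf labels (taxa) of a tree. -/
def leaves {X : Type} : PTree X → List X
  | .leaf x => [x]
  | .node l r => l.leaves ++ r.leaves

/-- Relabelling of taxa. -/
def map {X Y : Type} (φ : X → Y) : PTree X → PTree Y
  | .leaf x => .leaf (φ x)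
  | .node l r => .node (l.map φ) (r.map φ)

end PTree

/-- `T` is a phylogenetic tree on the taxon set `X`:
its leaves are bijectively labelled by the elements of `X`. -/
def IsPhylo {X : Type} (T : PTree X) : Prop :=
  T.leaves.Nodup ∧ ∀ x : X, x ∈ T.leaves

/-- A state-labelled binary tree (an extension assigns a state to every vertex). -/
inductive ETree (C : Type) : Type
  | leaf : C → ETree C
  | node : C → ETree C → ETree C → ETree C

namespace ETree

/-- The state at the root. -/
def root {C : Type} : ETree C → C
  | .leaf c => c
  | .node c _ _ => c

/-- The number of edges `{u,v}` with different states at the two endpoints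
(substitutions/mutations). -/
def changes {C : Type} [DecidableEq C] : ETree C → ℕ
  | .leaf _ => 0
  | .node c l r =>
      ((if l.root = c then 0 else 1) + (if r.root = c then 0 else 1)) +
        (l.changes + r.changes)

end ETree

/-- `g` is an extension of the character `f` to the tree `T`: it has the same
shape as `T`, assigns a state to every vertex, and agrees with `f` on the taxa. -/
inductive IsExtension {X C : Type} (f : X → C) : PTree X → ETree C → Prop
  | leaf (x : X) : IsExtension f (.leaf x) (.leaf (f x))
  | node {l r : PTree X} {gl gr : ETree C} (c : C) :
      IsExtension f l gl → IsExtension f r gr →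
      IsExtension f (.node l r) (.node c gl gr)

/-- The parsimony score `l_f(T)`: the minimum number of mutation edges
over all extensions of `f` to `T`. -/
noncomputable def pscore {X C : Type} [DecidableEq C] (f : X → C) (T : PTree X) : ℕ :=
  sInf { k : ℕ | ∃ g : ETree C, IsExtension f T g ∧ g.changes = k }

/-- The MP distance `d_MP(T1,T2) = max_f |l_f(T1) − l_f(T2)|`, the maximum taken
over all characters `f` on the taxon set (states drawn from `ℕ`). -/
noncomputable def dMP {X : Type} (T1 T2 : PTree X) : ℕ :=
  sSup { k : ℕ | ∃ f : X → ℕ, k = ((pscore f T1 : ℤ) - (pscore f T2 : ℤ)).natAbs }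

/-- `d^i_MP(T1,T2)`: as `dMP`, but over characters using at most `i` states. -/
noncomputable def dMPk {X : Type} (i : ℕ) (T1 T2 : PTree X) : ℕ :=
  sSup { k : ℕ | ∃ f : X → Fin i, k = ((pscore f T1 : ℤ) - (pscore f T2 : ℤ)).natAbs }

/-- `max_f (l_f(T2) − l_f(T1))` over all characters `f`. -/
noncomputable def maxDiff {X : Type} (T1 T2 : PTree X) : ℤ :=
  sSup { d : ℤ | ∃ f : X → ℕ, d = (pscore f T2 : ℤ) - (pscore f T1 : ℤ) }

/-- `max_f (l_f(T2) − l_f(T1))` over all characters `f` with at most `i` states. -/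
noncomputable def maxDiffk {X : Type} (i : ℕ) (T1 T2 : PTree X) : ℤ :=
  sSup { d : ℤ | ∃ f : X → Fin i, d = (pscore f T2 : ℤ) - (pscore f T1 : ℤ) }

/-- `gap(T1,T2) = |max_f(l_f(T2)−l_f(T1)) − max_f(l_f(T1)−l_f(T2))|`. -/
noncomputable def gap {X : Type} (T1 T2 : PTree X) : ℤ :=
  |maxDiff T1 T2 - maxDiff T2 T1|

/-- `gap` restricted to characters with at most `i` states. -/
noncomputable def gapk {X : Type} (i : ℕ) (T1 T2 : PTree X) : ℤ :=
  |maxDiffk i T1 T2 - maxDiffk i T2 T1|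

/-- `s` occurs as a (rooted) subtree of `t`. -/
inductive IsSubtree {X : Type} : PTree X → PTree X → Prop
  | refl (t : PTree X) : IsSubtree t t
  | left {s l r : PTree X} : IsSubtree s l → IsSubtree s (.node l r)
  | right {s l r : PTree X} : IsSubtree s r → IsSubtree s (.node l r)

/-- Taxa `a`, `b` form a cherry of `T`: they are leaves with a common parent. -/
def IsCherry {X : Type} (T : PTree X) (a b : X) : Prop :=
  IsSubtree (.node (.leaf a) (.leaf b)) T

/-- Relabel a tree on taxa `ℕ` by shifting all labels up by `s` (fresh copies). -/
def shiftT (s : ℕ) (T : PTree ℕ) : PTree ℕ := T.map (fun x => x + s)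

/-- `T_a = (((((2,3),4),5),6),1)` on taxa `{1,…,6}` (taxon `j` encoded as `j-1`). -/
def Ta6 : PTree ℕ :=
  .node (.node (.node (.node (.node (.leaf 1) (.leaf 2)) (.leaf 3)) (.leaf 4)) (.leaf 5)) (.leaf 0)

/-- `T_b = ((((2,6),(3,4)),5),1)` on taxa `{1,…,6}` (taxon `j` encoded as `j-1`). -/
def Tb6 : PTree ℕ :=
  .node (.node (.node (.node (.leaf 1) (.leaf 5)) (.node (.leaf 2) (.leaf 3))) (.leaf 4)) (.leaf 0)

/-- `T_A`: two disjoint copies of `T_a` joined under a new root (12 taxa). -/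
def TA12 : PTree ℕ := .node Ta6 (shiftT 6 Ta6)

/-- `T_B`: two disjoint copies of `T_b` joined under a new root (12 taxa). -/
def TB12 : PTree ℕ := .node Tb6 (shiftT 6 Tb6)

/-- `TkA k` is the tree `T^{k+1}_A`: `k+1` disjoint copies of `T_A` arranged
along a caterpillar backbone (so `TkA 0 = T^1_A = T_A`). -/
def TkA : ℕ → PTree ℕ
  | 0 => TA12
  | k+1 => .node (TkA k) (shiftT (12*(k+1)) TA12)

/-- `TkB k` is the tree `T^{k+1}_B`. -/
def TkB : ℕ → PTree ℕ
  | 0 => TB12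
  | k+1 => .node (TkB k) (shiftT (12*(k+1)) TB12)

/-- `T_a = (((5,(6,4)),3),((1,(8,2)),7))` on taxa `{1,…,8}` (taxon `j` encoded as `j-1`). -/
def Ta8 : PTree ℕ :=
  .node (.node (.node (.leaf 4) (.node (.leaf 5) (.leaf 3))) (.leaf 2))
        (.node (.node (.leaf 0) (.node (.leaf 7) (.leaf 1))) (.leaf 6))

/-- `T_b = (((7,((4,2),6)),3),(8,(1,5)))` on taxa `{1,…,8}` (taxon `j` encoded as `j-1`). -/
def Tb8 : PTree ℕ :=
  .node (.node (.node (.leaf 6) (.node (.node (.leaf 3) (.leaf 1)) (.leaf 5))) (.leaf 2))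
        (.node (.leaf 7) (.node (.leaf 0) (.leaf 4)))

/-- `T_A` (2-state construction): two disjoint copies of `T_a` under a new root (16 taxa). -/
def TA16 : PTree ℕ := .node Ta8 (shiftT 8 Ta8)

/-- `T_B` (2-state construction): two disjoint copies of `T_b` under a new root (16 taxa). -/
def TB16 : PTree ℕ := .node Tb8 (shiftT 8 Tb8)

/-- `T_AA`: two disjoint copies of `T_A` under a new root (32 taxa). -/
def TAA : PTree ℕ := .node TA16 (shiftT 16 TA16)

/-- `T_BB`: two disjoint copies of `T_B` under a new root (32 taxa). -/
def TBB : PTree ℕ := .node TB16 (shiftT 16 TB16)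

/-- `TkAA k` is the tree `T^{k+1}_AA` (so `TkAA 0 = T^1_AA = T_AA`). -/
def TkAA : ℕ → PTree ℕ
  | 0 => TAA
  | k+1 => .node (TkAA k) (shiftT (32*(k+1)) TAA)

/-- `TkBB k` is the tree `T^{k+1}_BB`. -/
def TkBB : ℕ → PTree ℕ
  | 0 => TBB
  | k+1 => .node (TkBB k) (shiftT (32*(k+1)) TBB)



/-! ### Auxiliary development: Fitch/Sankoff-style cost function -/

/-- `mstar f T c` = minimum over all extensions `g` of `f` to `T` of
`g.changes + (1 if g.root ≠ c)`. -/
def mstar (f : ℕ → Fin 2) : PTree ℕ → Fin 2 → ℕ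
  | .leaf x, c => if c = f x then 0 else 1
  | .node l r, c =>
      min (mstar f l c + mstar f r c) (mstar f l (c+1) + mstar f r (c+1) + 1)

lemma fin2_cases : ∀ s c : Fin 2, s = c ∨ s = c + 1 := by decide

lemma fin2_succ_ne : ∀ c : Fin 2, (c + 1 : Fin 2) ≠ c := by decide

lemma root_leaf (c : Fin 2) : (ETree.leaf c).root = c := rfl
lemma root_node (c : Fin 2) (l r : ETree (Fin 2)) : (ETree.node c l r).root = c := rfl
lemma changes_leaf (c : Fin 2) : (ETree.leaf c).changes = 0 := rfl
lemma changes_node (c : Fin 2) (l r : ETree (Fin 2)) :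
    (ETree.node c l r).changes =
      ((if l.root = c then 0 else 1) + (if r.root = c then 0 else 1)) +
        (l.changes + r.changes) := rfl

lemma mstar_le {f : ℕ → Fin 2} {T : PTree ℕ} {g : ETree (Fin 2)}
    (h : IsExtension f T g) :
    ∀ c, mstar f T c ≤ g.changes + (if g.root = c then 0 else 1) := by
  induction h with
  | leaf x =>
      intro c
      by_cases hc : c = f x <;>
        simp [mstar, changes_leaf, root_leaf, hc, eq_comm]
  | node s hl hr ihl ihr =>
      intro c
      rcases fin2_cases s c with h | h
      · have h1 := ihl c; have h2 := ihr c
        simp only [mstar, changes_node, root_node, h]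
        simp only [if_true]
        refine le_trans (min_le_left _ _) ?_
        linarith
      · have h1 := ihl (c+1); have h2 := ihr (c+1)
        simp only [mstar, changes_node, root_node, h, if_neg (fin2_succ_ne c)]
        refine le_trans (min_le_right _ _) ?_
        linarith

lemma exists_ext (f : ℕ → Fin 2) :
    ∀ (T : PTree ℕ) (c : Fin 2),
      ∃ g : ETree (Fin 2), IsExtension f T g ∧
        g.changes + (if g.root = c then 0 else 1) = mstar f T c := by
  intro T
  induction T with
  | leaf x =>
      intro c
      refine ⟨.leaf (f x), .leaf x, ?_⟩
      by_cases hc : c = f x <;>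
        simp [mstar, changes_leaf, root_leaf, hc, eq_comm]
  | node l r ihl ihr =>
      intro c
      by_cases h : mstar f l c + mstar f r c ≤ mstar f l (c+1) + mstar f r (c+1) + 1
      · obtain ⟨gl, hgl, el⟩ := ihl c
        obtain ⟨gr, hgr, er⟩ := ihr c
        refine ⟨.node c gl gr, .node c hgl hgr, ?_⟩
        simp only [mstar, changes_node, root_node, min_eq_left h]
        simp only [if_true]
        linarith
      · obtain ⟨gl, hgl, el⟩ := ihl (c+1)
        obtain ⟨gr, hgr, er⟩ := ihr (c+1)
        refine ⟨.node (c+1) gl gr, .node (c+1) hgl hgr, ?_⟩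
        have h' : mstar f l (c+1) + mstar f r (c+1) + 1 ≤ mstar f l c + mstar f r c :=
          le_of_lt (lt_of_not_ge h)
        simp only [mstar, changes_node, root_node, if_neg (fin2_succ_ne c),
          min_eq_right h']
        simp only [fin2_succ_ne c, if_false]
        linarith

lemma fin2_eq_zero_or_one : ∀ c : Fin 2, c = 0 ∨ c = 1 := by decide

lemma pscore_eq (f : ℕ → Fin 2) (T : PTree ℕ) :
    pscore f T = min (mstar f T 0) (mstar f T 1) := by
  obtain ⟨c, hc⟩ : ∃ c : Fin 2, mstar f T c = min (mstar f T 0) (mstar f T 1) := by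
    rcases le_total (mstar f T 0) (mstar f T 1) with h | h
    · exact ⟨0, (min_eq_left h).symm⟩
    · exact ⟨1, (min_eq_right h).symm⟩
  obtain ⟨g, hg, he⟩ := exists_ext f T c
  have hmin : ∀ g' : ETree (Fin 2), IsExtension f T g' →
      min (mstar f T 0) (mstar f T 1) ≤ g'.changes := by
    intro g' hg'
    rcases fin2_eq_zero_or_one g'.root with h | h
    · have h1 := mstar_le hg' 0
      rw [h, if_pos rfl] at h1
      exact le_trans (min_le_left _ _) (by omega)
    · have h1 := mstar_le hg' 1
      rw [h, if_pos rfl] at h1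
      exact le_trans (min_le_right _ _) (by omega)
  have hgc : g.changes = min (mstar f T 0) (mstar f T 1) := by
    have h1 : g.changes ≤ min (mstar f T 0) (mstar f T 1) := by
      rw [← hc, ← he]; exact Nat.le_add_right _ _
    exact le_antisymm h1 (hmin g hg)
  unfold pscore
  apply le_antisymm
  · calc sInf {k : ℕ | ∃ g : ETree (Fin 2), IsExtension f T g ∧ g.changes = k}
        ≤ g.changes := Nat.sInf_le ⟨g, hg, rfl⟩
      _ = _ := hgc
  · refine le_csInf ⟨g.changes, g, hg, rfl⟩ ?_
    rintro k ⟨g', hg', rfl⟩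
    exact hmin g' hg'

lemma mstar_map (f : ℕ → Fin 2) (φ : ℕ → ℕ) :
    ∀ (T : PTree ℕ) (c : Fin 2), mstar f (T.map φ) c = mstar (fun x => f (φ x)) T c := by
  intro T
  induction T with
  | leaf x => intro c; simp [PTree.map, mstar]
  | node l r ihl ihr => intro c; simp [PTree.map, mstar, ihl, ihr]

lemma mstar_congr {f f' : ℕ → Fin 2} :
    ∀ (T : PTree ℕ), (∀ x ∈ T.leaves, f x = f' x) →
      ∀ c, mstar f T c = mstar f' T c := by
  intro T
  induction T with
  | leaf x => intro h c; simp [mstar, h x (by simp [PTree.leaves])]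
  | node l r ihl ihr =>
      intro h c
      have hl := ihl fun x hx => h x (by simp [PTree.leaves, hx])
      have hr := ihr fun x hx => h x (by simp [PTree.leaves, hx])
      simp [mstar, hl, hr]

lemma mstar_node_bound {f : ℕ → Fin 2} {L1 R1 L2 R2 : PTree ℕ} {d1 d2 : ℕ}
    (hL : ∀ c, mstar f L1 c ≤ mstar f L2 c + d1)
    (hR : ∀ c, mstar f R1 c ≤ mstar f R2 c + d2) (c : Fin 2) :
    mstar f (.node L1 R1) c ≤ mstar f (.node L2 R2) c + (d1 + d2) := by
  have h1 := hL c; have h2 := hR c; have h3 := hL (c+1); have h4 := hR (c+1)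
  simp only [mstar]
  omega

/-! ### The finite core facts, by `decide` -/

def ext8 (v : Fin 8 → Fin 2) : ℕ → Fin 2 := fun n => if h : n < 8 then v ⟨n, h⟩ else 0

set_option maxRecDepth 10000 in
lemma core_bound : ∀ (v : Fin 8 → Fin 2) (c : Fin 2),
    mstar (ext8 v) Tb8 c ≤ mstar (ext8 v) Ta8 c + 3 ∧
    mstar (ext8 v) Ta8 c ≤ mstar (ext8 v) Tb8 c + 3 := by decide

/-- The witness character, with period 8. -/
def pat (n : ℕ) : Fin 2 := if 2 ≤ n % 8 ∧ n % 8 ≤ 5 then 1 else 0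

lemma va : mstar pat Ta8 0 = 1 ∧ mstar pat Ta8 1 = 1 := by decide
lemma vb : mstar pat Tb8 0 = 4 ∧ mstar pat Tb8 1 = 4 := by decide

lemma leaves_lt8_a : ∀ x ∈ Ta8.leaves, x < 8 := by decide
lemma leaves_lt8_b : ∀ x ∈ Tb8.leaves, x < 8 := by decide

lemma ext8_agree (f : ℕ → Fin 2) {T : PTree ℕ} (hT : ∀ x ∈ T.leaves, x < 8) (c : Fin 2) :
    mstar (ext8 fun i => f i) T c = mstar f T c :=
  mstar_congr T (fun x hx => by simp [ext8, hT x hx]) c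

lemma unit_bound8 (f : ℕ → Fin 2) (c : Fin 2) :
    mstar f Tb8 c ≤ mstar f Ta8 c + 3 ∧ mstar f Ta8 c ≤ mstar f Tb8 c + 3 := by
  have h := core_bound (fun i => f i) c
  rwa [ext8_agree f leaves_lt8_b, ext8_agree f leaves_lt8_a] at h

/-! ### Componentwise closeness and its propagation -/

def Close (T1 T2 : PTree ℕ) (d : ℕ) : Prop :=
  ∀ (f : ℕ → Fin 2) (c : Fin 2),
    mstar f T1 c ≤ mstar f T2 c + d ∧ mstar f T2 c ≤ mstar f T1 c + d

lemma close_node {L1 L2 R1 R2 : PTree ℕ} {d1 d2 : ℕ}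
    (hL : Close L1 L2 d1) (hR : Close R1 R2 d2) :
    Close (.node L1 R1) (.node L2 R2) (d1 + d2) := by
  intro f c
  exact ⟨mstar_node_bound (fun c => (hL f c).1) (fun c => (hR f c).1) c,
         mstar_node_bound (fun c => (hL f c).2) (fun c => (hR f c).2) c⟩

lemma close_shift {T1 T2 : PTree ℕ} {d : ℕ} (h : Close T1 T2 d) (s : ℕ) :
    Close (shiftT s T1) (shiftT s T2) d := by
  intro f c
  have := h (fun x => f (x + s)) c
  simp only [shiftT, mstar_map]
  exact this

lemma close_8 : Close Tb8 Ta8 3 := fun f c => unit_bound8 f c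

lemma close_AA : Close TBB TAA 12 := by
  have h16 : Close TB16 TA16 6 := close_node close_8 (close_shift close_8 8)
  exact close_node h16 (close_shift h16 16)

lemma close_TkAA : ∀ n, Close (TkBB n) (TkAA n) (12 * (n + 1)) := by
  intro n
  induction n with
  | zero => exact close_AA
  | succ n ih =>
      have h := close_node ih (close_shift close_AA (32 * (n + 1)))
      have e : 12 * (n + 1 + 1) = 12 * (n + 1) + 12 := by ring
      rw [e]
      exact h

lemma diff_bound (n : ℕ) (f : ℕ → Fin 2) :
    ((pscore f (TkAA n) : ℤ) - (pscore f (TkBB n) : ℤ)).natAbs ≤ 12 * (n + 1) := by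
  have pa := pscore_eq f (TkAA n)
  have pb := pscore_eq f (TkBB n)
  have h0 := close_TkAA n f 0
  have h1 := close_TkAA n f 1
  omega

/-! ### The witness computation -/

def EqPair (f : ℕ → Fin 2) (T : PTree ℕ) (m : ℕ) : Prop :=
  mstar f T 0 = m ∧ mstar f T 1 = m

lemma eqPair_node {f : ℕ → Fin 2} {L R : PTree ℕ} {a b : ℕ}
    (hL : EqPair f L a) (hR : EqPair f R b) : EqPair f (.node L R) (a + b) := by
  obtain ⟨hL0, hL1⟩ := hL
  obtain ⟨hR0, hR1⟩ := hR
  have e0 : ((0 : Fin 2) + 1) = 1 := rfl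
  have e1 : ((1 : Fin 2) + 1) = 0 := rfl
  constructor <;> simp only [mstar, e0, e1, hL0, hL1, hR0, hR1] <;> omega

lemma pat_period (t x : ℕ) : pat (x + 8 * t) = pat x := by
  simp [pat, Nat.add_mul_mod_self_left]

lemma eqPair_shift {T : PTree ℕ} {m : ℕ} (h : EqPair pat T m) (t : ℕ) :
    EqPair pat (shiftT (8 * t) T) m := by
  have e : ∀ c, mstar pat (shiftT (8 * t) T) c = mstar pat T c := by
    intro c
    simp only [shiftT, mstar_map]
    exact mstar_congr T (fun x _ => pat_period t x) c
  exact ⟨(e 0).trans h.1, (e 1).trans h.2⟩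

lemma pair_AA : EqPair pat TAA 4 := by
  have p16 : EqPair pat TA16 2 := eqPair_node va (eqPair_shift va 1)
  exact eqPair_node p16 (eqPair_shift p16 2)

lemma pair_BB : EqPair pat TBB 16 := by
  have p16 : EqPair pat TB16 8 := eqPair_node vb (eqPair_shift vb 1)
  exact eqPair_node p16 (eqPair_shift p16 2)

lemma pair_TkAA : ∀ n, EqPair pat (TkAA n) (4 * (n + 1)) := by
  intro n
  induction n with
  | zero => exact pair_AA
  | succ n ih =>
      have e : 32 * (n + 1) = 8 * (4 * (n + 1)) := by ring
      have h := eqPair_node ih (eqPair_shift pair_AA (4 * (n + 1)))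
      show EqPair pat (.node (TkAA n) (shiftT (32 * (n + 1)) TAA)) (4 * (n + 1 + 1))
      rw [e, show 4 * (n + 1 + 1) = 4 * (n + 1) + 4 by ring]
      exact h

lemma pair_TkBB : ∀ n, EqPair pat (TkBB n) (16 * (n + 1)) := by
  intro n
  induction n with
  | zero => exact pair_BB
  | succ n ih =>
      have e : 32 * (n + 1) = 8 * (4 * (n + 1)) := by ring
      have h := eqPair_node ih (eqPair_shift pair_BB (4 * (n + 1)))
      show EqPair pat (.node (TkBB n) (shiftT (32 * (n + 1)) TBB)) (16 * (n + 1 + 1))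
      rw [e, show 16 * (n + 1 + 1) = 16 * (n + 1) + 16 by ring]
      exact h

lemma witness (n : ℕ) :
    ((pscore pat (TkAA n) : ℤ) - (pscore pat (TkBB n) : ℤ)).natAbs = 12 * (n + 1) := by
  have pa := pscore_eq pat (TkAA n)
  have pb := pscore_eq pat (TkBB n)
  obtain ⟨ha0, ha1⟩ := pair_TkAA n
  obtain ⟨hb0, hb1⟩ := pair_TkBB n
  omega

/-- for every `k ≥ 1`, `d^2_MP(T^k_AA, T^k_BB) = 12k`.
(Recall `TkAA (k-1) = T^k_AA`.) -/
theorem dMP2_TkAA_TkBB (k : ℕ) (hk : 1 ≤ k) :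
    dMPk 2 (TkAA (k - 1)) (TkBB (k - 1)) = 12 * k := by
  obtain ⟨n, rfl⟩ : ∃ n, k = n + 1 := ⟨k - 1, (Nat.succ_pred_eq_of_pos hk).symm⟩
  simp only [Nat.add_sub_cancel]
  unfold dMPk
  have hub : ∀ m ∈ {m : ℕ | ∃ f : ℕ → Fin 2,
      m = ((pscore f (TkAA n) : ℤ) - (pscore f (TkBB n) : ℤ)).natAbs}, m ≤ 12 * (n + 1) := by
    rintro m ⟨f, rfl⟩
    exact diff_bound n f
  have hmem : 12 * (n + 1) ∈ {m : ℕ | ∃ f : ℕ → Fin 2,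
      m = ((pscore f (TkAA n) : ℤ) - (pscore f (TkBB n) : ℤ)).natAbs} :=
    ⟨pat, (witness n).symm⟩
  exact le_antisymm (csSup_le ⟨_, hmem⟩ hub) (le_csSup ⟨12 * (n + 1), hub⟩ hmem)

end MPDist
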